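/- For every x ≥ 1, the trigamma function satisfies 1/(x + 1/(π²/6 − 1) − 1) ≤ ψ'(1+x) ≤ 1/(x + 1/2), and consequently (π²/6 − 1)·log x ≤ ψ(1+x) − ψ(2) ≤ log x. -/

import Mathlib

open Real

/-- The digamma function `ψ(x) = −γ + ∑_{j≥0} (1/(j+1) − 1/(j+x))`. -/
noncomputable def digamma (x : ℝ) : ℝ :=
  -Real.eulerMascheroniConstant + ∑' j : ℕ, (1 / ((j : ℝ) + 1) - 1 / ((j : ℝ) + x))

/-- The trigamma function `ψ'(x) = ∑_{j≥0} 1/(j+x)²`. -/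
noncomputable def trigamma (x : ℝ) : ℝ := ∑' j : ℕ, 1 / ((j : ℝ) + x) ^ 2

namespace TrigammaAux

open Filter

noncomputable def bfun (a : ℝ) : ℝ := 1/a + 1/(2*a^2) + 1/(6*a^3) - 1/(30*a^5)
noncomputable def Bfun (a : ℝ) : ℝ := 1/a^2 + 1/a^3 + 1/(2*a^4)

lemma tendsto_one_div_pow (c : ℝ) (k : ℕ) (hk : k ≠ 0) :
    Tendsto (fun n : ℕ => 1 / ((n : ℝ) + c) ^ k) atTop (nhds 0) := by
  have h : Tendsto (fun n : ℕ => ((n : ℝ) + c)) atTop atTop :=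
    tendsto_atTop_add_const_right _ c tendsto_natCast_atTop_atTop
  have h2 : Tendsto (fun n : ℕ => ((n : ℝ) + c) ^ k) atTop atTop :=
    (tendsto_pow_atTop hk).comp h
  simpa [one_div, Pi.inv_def] using h2.inv_tendsto_atTop

lemma summable_inv_pow (y : ℝ) (hy : 1 ≤ y) (k : ℕ) (hk : 2 ≤ k) :
    Summable (fun j : ℕ => 1 / ((j : ℝ) + y) ^ k) := by
  have h := Real.summable_one_div_nat_pow.2 hk
  have h2 : Summable (fun j : ℕ => 1 / ((j : ℝ) + 1) ^ k) := by
    simpa using ((summable_nat_add_iff 1).2 h : _)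
  refine h2.of_nonneg_of_le (fun j => by positivity) (fun j => ?_)
  have h1 : (0:ℝ) < (j:ℝ) + 1 := by positivity
  have h2 : ((j:ℝ) + 1) ^ k ≤ ((j:ℝ) + y) ^ k := pow_le_pow_left₀ (by positivity) (by linarith) k
  exact div_le_div_of_nonneg_left (by norm_num) (by positivity) h2

lemma hasSum_telescope (a : ℕ → ℝ) (h0 : Tendsto a atTop (nhds 0))
    (hpos : ∀ n, 0 ≤ a n - a (n + 1)) :
    HasSum (fun n => a n - a (n + 1)) (a 0) := by
  rw [hasSum_iff_tendsto_nat_of_nonneg hpos]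
  have : ∀ n : ℕ, ∑ i ∈ Finset.range n, (a i - a (i + 1)) = a 0 - a n := by
    intro n; exact Finset.sum_range_sub' a n
  simp only [this]
  simpa using tendsto_const_nhds.sub h0

lemma bfun_step_le (a : ℝ) (ha : 1 ≤ a) : bfun a - bfun (a+1) ≤ 1/a^2 := by
  have h0 : (0:ℝ) < a := by linarith
  have h1 : (0:ℝ) < a + 1 := by linarith
  have key : 1/a^2 - (bfun a - bfun (a+1)) = (5*a^2+5*a+1)/(30*a^5*(a+1)^5) := by
    unfold bfun; field_simp; ring
  nlinarith [div_pos (by nlinarith : (0:ℝ) < 5*a^2+5*a+1)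
    (by positivity : (0:ℝ) < 30*a^5*(a+1)^5), key]

lemma bfun_step_nonneg (a : ℝ) (ha : 1 ≤ a) : 0 ≤ bfun a - bfun (a+1) := by
  have h0 : (0:ℝ) < a := by linarith
  have h1 : (0:ℝ) < a + 1 := by linarith
  have key : bfun a - bfun (a+1) = (30*a^3*(a+1)^5 - (5*a^2+5*a+1))/(30*a^5*(a+1)^5) := by
    unfold bfun; field_simp; ring
  rw [key]
  apply div_nonneg _ (by positivity)
  nlinarith [pow_le_pow_left₀ (by positivity : (0:ℝ) ≤ a) (by linarith : a ≤ a + 1) 5,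
    one_le_pow₀ ha (n:=3), one_le_pow₀ (by linarith : (1:ℝ) ≤ a+1) (n:=5)]

lemma Bfun_step (a : ℝ) (ha : 1 ≤ a) : 2/a^3 ≤ Bfun a - Bfun (a+1) := by
  have h0 : (0:ℝ) < a := by linarith
  have h1 : (0:ℝ) < a + 1 := by linarith
  have key : (Bfun a - Bfun (a+1)) - 2/a^3 = (2*a+1)/(2*a^4*(a+1)^4) := by
    unfold Bfun; field_simp; ring
  nlinarith [div_pos (by linarith : (0:ℝ) < 2*a+1)
    (by positivity : (0:ℝ) < 2*a^4*(a+1)^4), key]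

lemma bfun_pos (a : ℝ) (ha : 1 ≤ a) : 0 < bfun a := by
  have h0 : (0:ℝ) < a := by linarith
  have key : bfun a = (30*a^4+15*a^3+5*a^2-1)/(30*a^5) := by unfold bfun; field_simp; ring
  rw [key]
  apply div_pos _ (by positivity)
  nlinarith [one_le_pow₀ ha (n:=2), one_le_pow₀ ha (n:=3), one_le_pow₀ ha (n:=4)]

lemma bfun_sq_ge (y : ℝ) (hy : 2 ≤ y) : Bfun y ≤ bfun y ^ 2 := by
  have two_nn : (0:ℝ) ≤ 2 := by norm_num
  have h0 : (0:ℝ) < y := by linarith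
  have key : bfun y ^ 2 - Bfun y
      = (75*y^6+150*y^5-35*y^4-30*y^3-10*y^2+1)/(900*y^10) := by
    unfold bfun Bfun; field_simp; ring
  have hnum : (0:ℝ) < 75*y^6+150*y^5-35*y^4-30*y^3-10*y^2+1 := by
    nlinarith [pow_le_pow_left₀ two_nn hy 2, pow_le_pow_left₀ two_nn hy 3,
      pow_le_pow_left₀ two_nn hy 4,
      mul_le_mul_of_nonneg_left (pow_le_pow_left₀ two_nn hy 4) (by positivity : (0:ℝ) ≤ y^2)]
  nlinarith [key, div_pos hnum (by positivity : (0:ℝ) < 900*y^10)]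

lemma trigamma_le (y : ℝ) (hy : 1 ≤ y) : trigamma y ≤ 1 / (y - 1/2) := by
  set a : ℕ → ℝ := fun n => 1 / ((n : ℝ) + y - 1/2) with ha
  have hpos : ∀ n : ℕ, (0:ℝ) < (n : ℝ) + y := fun n => by positivity
  have key : ∀ n : ℕ, a n - a (n + 1) = 1 / ((n:ℝ) + y - 1/2) - 1 / ((n:ℝ) + y + 1/2) := by
    intro n; simp only [ha]; push_cast; ring_nf
  have hstep : ∀ n : ℕ, 1 / ((n : ℝ) + y) ^ 2 ≤ a n - a (n + 1) := by
    intro n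
    rw [key n]
    have h1 : (0:ℝ) < (n:ℝ) + y - 1/2 := by linarith [hpos n]
    have h2 : (0:ℝ) < (n:ℝ) + y + 1/2 := by linarith [hpos n]
    rw [div_sub_div _ _ (ne_of_gt h1) (ne_of_gt h2),
      div_le_div_iff₀ (by positivity) (by positivity)]
    nlinarith [hpos n]
  have hnn : ∀ n : ℕ, 0 ≤ a n - a (n + 1) := fun n =>
    le_trans (by positivity) (hstep n)
  have h0 : Tendsto a atTop (nhds 0) := by
    have := tendsto_one_div_pow (y - 1/2) 1 one_ne_zero
    simpa [ha, pow_one, add_sub_assoc] using this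
  have hsum := hasSum_telescope a h0 hnn
  have ha0 : a 0 = 1 / (y - 1/2) := by simp [ha]
  calc trigamma y ≤ ∑' n, (a n - a (n+1)) :=
        Summable.tsum_le_tsum hstep (summable_inv_pow y hy 2 le_rfl) hsum.summable
    _ = 1 / (y - 1/2) := by rw [hsum.tsum_eq, ha0]

lemma tendsto_bfun (y : ℝ) (hy : 1 ≤ y) :
    Tendsto (fun n : ℕ => bfun ((n : ℝ) + y)) atTop (nhds 0) := by
  have e : ∀ n : ℕ, bfun ((n : ℝ) + y)
      = 1/((n:ℝ)+y)^1 + (1/((n:ℝ)+y)^2)/2 + (1/((n:ℝ)+y)^3)/6 - (1/((n:ℝ)+y)^5)/30 := by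
    intro n
    have h : (0:ℝ) < (n:ℝ) + y := by positivity
    unfold bfun; field_simp
  simp only [e]
  have T1 := tendsto_one_div_pow y 1 one_ne_zero
  have T2 := tendsto_one_div_pow y 2 two_ne_zero
  have T3 := tendsto_one_div_pow y 3 three_ne_zero
  have T5 := tendsto_one_div_pow y 5 (by norm_num)
  have := ((T1.add (T2.div_const 2)).add (T3.div_const 6)).sub (T5.div_const 30)
  simpa using this

lemma tendsto_Bfun (y : ℝ) (hy : 1 ≤ y) :
    Tendsto (fun n : ℕ => Bfun ((n : ℝ) + y)) atTop (nhds 0) := by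
  have e : ∀ n : ℕ, Bfun ((n : ℝ) + y)
      = 1/((n:ℝ)+y)^2 + 1/((n:ℝ)+y)^3 + (1/((n:ℝ)+y)^4)/2 := by
    intro n
    have h : (0:ℝ) < (n:ℝ) + y := by positivity
    unfold Bfun; field_simp
  simp only [e]
  have T2 := tendsto_one_div_pow y 2 two_ne_zero
  have T3 := tendsto_one_div_pow y 3 three_ne_zero
  have T4 := tendsto_one_div_pow y 4 (by norm_num)
  have := (T2.add T3).add (T4.div_const 2)
  simpa using this

lemma trigamma_ge (y : ℝ) (hy : 1 ≤ y) : bfun y ≤ trigamma y := by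
  set a : ℕ → ℝ := fun n => bfun ((n : ℝ) + y) with ha
  have hyn : ∀ n : ℕ, (1:ℝ) ≤ (n:ℝ) + y := fun n => by
    have : (0:ℝ) ≤ (n:ℝ) := Nat.cast_nonneg n
    linarith
  have hshift : ∀ n : ℕ, a (n + 1) = bfun (((n:ℝ) + y) + 1) := by
    intro n; simp only [ha]; push_cast; ring_nf
  have hnn : ∀ n, 0 ≤ a n - a (n + 1) := by
    intro n; rw [hshift n]; exact bfun_step_nonneg _ (hyn n)
  have hstep : ∀ n : ℕ, a n - a (n + 1) ≤ 1/((n:ℝ)+y)^2 := by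
    intro n; rw [hshift n]; exact bfun_step_le _ (hyn n)
  have hsum := hasSum_telescope a (tendsto_bfun y hy) hnn
  calc bfun y = a 0 := by simp [ha]
    _ = ∑' n, (a n - a (n+1)) := hsum.tsum_eq.symm
    _ ≤ trigamma y := Summable.tsum_le_tsum hstep hsum.summable (summable_inv_pow y hy 2 le_rfl)

lemma cube_le (y : ℝ) (hy : 1 ≤ y) : (∑' j : ℕ, 2/((j:ℝ)+y)^3) ≤ Bfun y := by
  set a : ℕ → ℝ := fun n => Bfun ((n : ℝ) + y) with ha
  have hyn : ∀ n : ℕ, (1:ℝ) ≤ (n:ℝ) + y := fun n => by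
    have : (0:ℝ) ≤ (n:ℝ) := Nat.cast_nonneg n
    linarith
  have hshift : ∀ n : ℕ, a (n + 1) = Bfun (((n:ℝ) + y) + 1) := by
    intro n; simp only [ha]; push_cast; ring_nf
  have hstep : ∀ n : ℕ, 2/((n:ℝ)+y)^3 ≤ a n - a (n + 1) := by
    intro n; rw [hshift n]; exact Bfun_step _ (hyn n)
  have hnn : ∀ n, 0 ≤ a n - a (n + 1) := by
    intro n
    refine le_trans ?_ (hstep n)
    positivity
  have hsum := hasSum_telescope a (tendsto_Bfun y hy) hnn
  have hsummable : Summable (fun j : ℕ => 2/((j:ℝ)+y)^3) := by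
    have := (summable_inv_pow y hy 3 (by norm_num)).mul_left 2
    simpa [div_eq_mul_inv] using this
  calc (∑' j : ℕ, 2/((j:ℝ)+y)^3) ≤ ∑' n, (a n - a (n+1)) :=
        Summable.tsum_le_tsum hstep hsummable hsum.summable
    _ = Bfun y := by rw [hsum.tsum_eq]; simp [ha]

lemma trigamma_pos (y : ℝ) (hy : 1 ≤ y) : 0 < trigamma y :=
  lt_of_lt_of_le (bfun_pos y hy) (trigamma_ge y hy)

lemma trigamma_two : trigamma 2 = π ^ 2 / 6 - 1 := by
  have h : HasSum (fun n : ℕ => (1:ℝ) / (n:ℝ)^2)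
      (π ^ 2 / 6 - 1 + ∑ i ∈ Finset.range 2, (1:ℝ)/(i:ℝ)^2) := by
    have : (∑ i ∈ Finset.range 2, (1:ℝ)/(i:ℝ)^2) = 1 := by
      norm_num [Finset.sum_range_succ]
    rw [this, sub_add_cancel]
    exact hasSum_zeta_two
  have h2 := (hasSum_nat_add_iff (f := fun n : ℕ => (1:ℝ) / (n:ℝ)^2) 2).2 h
  have h3 : HasSum (fun n : ℕ => 1 / ((n : ℝ) + 2) ^ 2) (π ^ 2 / 6 - 1) := by
    simpa using h2
  exact h3.tsum_eq

lemma hasDerivAt_trigamma (x : ℝ) (hx : 0 < x) :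
    HasDerivAt (fun t => trigamma (1+t)) (-∑' j : ℕ, 2/((j:ℝ)+(1+x))^3) x := by
  have key : HasDerivAt (fun z => ∑' n : ℕ, (1 / ((n:ℝ) + (1+z)) ^ 2))
      (∑' n : ℕ, (-(2/((n:ℝ)+(1+x))^3))) x := by
    refine hasDerivAt_tsum_of_isPreconnected
      (u := fun n : ℕ => 2/((n:ℝ)+1)^3) (t := Set.Ioi (0:ℝ)) (y₀ := 1)
      (g := fun (n : ℕ) (z : ℝ) => 1 / ((n:ℝ) + (1+z)) ^ 2)
      (g' := fun (n : ℕ) (z : ℝ) => -(2/((n:ℝ)+(1+z))^3)) ?_ ?_ ?_ ?_ ?_ ?_ ?_ ?_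
    · have := (summable_inv_pow 1 le_rfl 3 (by norm_num)).mul_left 2
      simpa [div_eq_mul_inv] using this
    · exact isOpen_Ioi
    · exact (convex_Ioi (0:ℝ)).isPreconnected
    · intro n y hy
      have hy0 : (0:ℝ) < y := hy
      have hpos : (0:ℝ) < (n:ℝ) + (1+y) := by positivity
      have h1 : HasDerivAt (fun y : ℝ => (n:ℝ) + (1+y)) 1 y := by
        simpa using ((hasDerivAt_id y).const_add (1:ℝ)).const_add (n:ℝ)
      have h2 := (h1.pow 2).inv (pow_ne_zero 2 (ne_of_gt hpos))
      simp only [one_div]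
      refine h2.congr_deriv ?_
      simp only [Pi.pow_apply]
      push_cast
      field_simp
    · intro n y hy
      have hy0 : (0:ℝ) < y := hy
      have hpos : (0:ℝ) < (n:ℝ) + 1 := by positivity
      rw [norm_neg, Real.norm_eq_abs, abs_of_nonneg (by positivity)]
      have hle : ((n:ℝ)+1)^3 ≤ ((n:ℝ)+(1+y))^3 :=
        pow_le_pow_left₀ (by positivity) (by linarith) 3
      exact div_le_div_of_nonneg_left (by norm_num) (by positivity) hle
    · exact Set.mem_Ioi.2 one_pos
    · have := summable_inv_pow 2 (by norm_num) 2 le_rfl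
      apply this.congr
      intro n
      norm_num
    · exact Set.mem_Ioi.2 hx
  have := key
  rw [tsum_neg] at this
  exact this

lemma hasDerivAt_digamma (x : ℝ) (hx : 0 < x) :
    HasDerivAt (fun t => digamma (1+t)) (trigamma (1+x)) x := by
  have key : HasDerivAt (fun z => ∑' n : ℕ, (1 / ((n:ℝ) + 1) - 1 / ((n:ℝ) + (1+z))))
      (∑' n : ℕ, (1 / ((n:ℝ)+(1+x))^2)) x := by
    refine hasDerivAt_tsum_of_isPreconnected
      (u := fun n : ℕ => 1/((n:ℝ)+1)^2) (t := Set.Ioi (0:ℝ)) (y₀ := 1)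
      (g := fun (n : ℕ) (z : ℝ) => 1 / ((n:ℝ) + 1) - 1 / ((n:ℝ) + (1+z)))
      (g' := fun (n : ℕ) (z : ℝ) => 1 / ((n:ℝ)+(1+z))^2) ?_ ?_ ?_ ?_ ?_ ?_ ?_ ?_
    · exact summable_inv_pow 1 le_rfl 2 le_rfl
    · exact isOpen_Ioi
    · exact (convex_Ioi (0:ℝ)).isPreconnected
    · intro n y hy
      have hy0 : (0:ℝ) < y := hy
      have hpos : (0:ℝ) < (n:ℝ) + (1+y) := by positivity
      have h1 : HasDerivAt (fun y : ℝ => (n:ℝ) + (1+y)) 1 y := by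
        simpa using ((hasDerivAt_id y).const_add (1:ℝ)).const_add (n:ℝ)
      have h2 := (h1.inv (ne_of_gt hpos)).const_sub (1/((n:ℝ)+1))
      have heq : -(-1 / ((n:ℝ) + (1+y)) ^ 2) = 1 / ((n:ℝ)+(1+y))^2 := by ring
      rw [heq] at h2
      simpa [one_div] using h2
    · intro n y hy
      have hy0 : (0:ℝ) < y := hy
      have hpos : (0:ℝ) < (n:ℝ) + 1 := by positivity
      rw [Real.norm_eq_abs, abs_of_nonneg (by positivity)]
      have hle : ((n:ℝ)+1)^2 ≤ ((n:ℝ)+(1+y))^2 :=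
        pow_le_pow_left₀ (by positivity) (by linarith) 2
      exact div_le_div_of_nonneg_left (by norm_num) (by positivity) hle
    · exact Set.mem_Ioi.2 one_pos
    · have base := hasSum_telescope (fun n : ℕ => 1/((n:ℝ)+1))
        (tendsto_one_div_pow 1 1 one_ne_zero |>.congr (by intro n; norm_num))
        (by
          intro n
          have h1 : (0:ℝ) < (n:ℝ) + 1 := by positivity
          have h2 : (0:ℝ) < (n:ℝ) + 1 + 1 := by positivity
          have : (1:ℝ)/((n:ℝ)+1+1) ≤ 1/((n:ℝ)+1) := by gcongr <;> linarith
          push_cast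
          simpa using this)
      apply base.summable.congr
      intro n
      push_cast
      ring
    · exact Set.mem_Ioi.2 hx
  unfold digamma
  exact key.const_add _

lemma mono_from_deriv {f f' : ℝ → ℝ} (hd : ∀ t, 1 ≤ t → HasDerivAt f (f' t) t)
    (h0 : ∀ t, 1 ≤ t → 0 ≤ f' t) {x : ℝ} (hx : 1 ≤ x) : f 1 ≤ f x := by
  have hmono : MonotoneOn f (Set.Ici 1) := by
    apply monotoneOn_of_deriv_nonneg (convex_Ici 1)
    · intro t ht
      exact (hd t ht).continuousAt.continuousWithinAt
    · intro t ht
      rw [interior_Ici] at ht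
      exact (hd t (le_of_lt ht)).differentiableAt.differentiableWithinAt
    · intro t ht
      rw [interior_Ici] at ht
      rw [(hd t ht.le).deriv]
      exact h0 t ht.le
  exact hmono Set.self_mem_Ici (Set.mem_Ici.2 hx) hx

lemma trig_lower (x : ℝ) (hx : 1 ≤ x) :
    1 / (x + 1 / (π ^ 2 / 6 - 1) - 1) ≤ trigamma (1 + x) := by
  have hC : (0:ℝ) < π ^ 2 / 6 - 1 := by nlinarith [Real.pi_gt_three]
  set C : ℝ := π ^ 2 / 6 - 1 with hCdef
  have htp : ∀ t : ℝ, 1 ≤ t → 0 < trigamma (1+t) := fun t ht =>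
    trigamma_pos (1+t) (by linarith)
  -- H t = t + (1/C - 1) - (trigamma (1+t))⁻¹ is monotone on [1,∞)
  have key : (trigamma (1+x))⁻¹ ≤ x + 1/C - 1 := by
    have hmono := mono_from_deriv
      (f := fun t => t + (1/C - 1) - (trigamma (1+t))⁻¹)
      (f' := fun t => 1 - (∑' j : ℕ, 2/((j:ℝ)+(1+t))^3) / (trigamma (1+t))^2)
      (fun t ht => by
        have h1 := hasDerivAt_trigamma t (by linarith)
        have h2 := h1.inv (ne_of_gt (htp t ht))
        have h3 := ((hasDerivAt_id t).add_const (1/C - 1)).sub h2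
        exact h3.congr_deriv (by ring))
      (fun t ht => by
        have hψ := htp t ht
        have hS : (∑' j : ℕ, 2/((j:ℝ)+(1+t))^3) ≤ (trigamma (1+t))^2 := by
          calc (∑' j : ℕ, 2/((j:ℝ)+(1+t))^3) ≤ Bfun (1+t) := cube_le (1+t) (by linarith)
            _ ≤ bfun (1+t) ^ 2 := bfun_sq_ge (1+t) (by linarith)
            _ ≤ trigamma (1+t) ^ 2 :=
                pow_le_pow_left₀ (le_of_lt (bfun_pos (1+t) (by linarith)))
                  (trigamma_ge (1+t) (by linarith)) 2
        have : (∑' j : ℕ, 2/((j:ℝ)+(1+t))^3) / (trigamma (1+t))^2 ≤ 1 :=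
          (div_le_one (by positivity)).2 hS
        linarith)
      hx
    have h1eq : (1:ℝ) + (1/C - 1) - (trigamma (1+1))⁻¹ = 0 := by
      have : trigamma (1+1) = C := by norm_num [trigamma_two, hCdef]
      rw [this]
      ring
    linarith [hmono, h1eq.symm ▸ hmono]
  have hD : (0:ℝ) < x + 1/C - 1 := by
    have : (0:ℝ) < 1/C := by positivity
    linarith
  rw [div_le_iff₀ hD]
  have hψ := htp x hx
  calc (1:ℝ) = trigamma (1+x) * (trigamma (1+x))⁻¹ := (mul_inv_cancel₀ (ne_of_gt hψ)).symm
    _ ≤ trigamma (1+x) * (x + 1/C - 1) := by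
        apply mul_le_mul_of_nonneg_left key (le_of_lt hψ)

end TrigammaAux

/-- For `x ≥ 1`: `1/(x + 1/(π²/6 − 1) − 1) ≤ ψ'(1+x) ≤ 1/(x + 1/2)`, and consequently
`(π²/6 − 1) log x ≤ ψ(1+x) − ψ(2) ≤ log x`. -/
theorem trigamma_digamma_bounds (x : ℝ) (hx : 1 ≤ x) :
    (1 / (x + 1 / (Real.pi ^ 2 / 6 - 1) - 1) ≤ trigamma (1 + x) ∧
      trigamma (1 + x) ≤ 1 / (x + 1 / 2)) ∧
    ((Real.pi ^ 2 / 6 - 1) * Real.log x ≤ digamma (1 + x) - digamma 2 ∧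
      digamma (1 + x) - digamma 2 ≤ Real.log x) := by
  have hC : (0:ℝ) < π ^ 2 / 6 - 1 := by nlinarith [Real.pi_gt_three]
  have hC1 : π ^ 2 / 6 - 1 ≤ 1 := by nlinarith [Real.pi_lt_d2, Real.pi_pos]
  set C : ℝ := π ^ 2 / 6 - 1 with hCdef
  have hupper : ∀ t : ℝ, 1 ≤ t → trigamma (1+t) ≤ 1 / (t + 1/2) := by
    intro t ht
    have h := TrigammaAux.trigamma_le (1+t) (by linarith)
    have he : (1:ℝ) + t - 1/2 = t + 1/2 := by ring
    rwa [he] at h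
  refine ⟨⟨TrigammaAux.trig_lower x hx, hupper x hx⟩, ?_, ?_⟩
  · -- lower digamma bound
    have hm := TrigammaAux.mono_from_deriv
      (f := fun t => digamma (1+t) - C * Real.log t)
      (f' := fun t => trigamma (1+t) - C * t⁻¹)
      (fun t ht => by
        have h1 := TrigammaAux.hasDerivAt_digamma t (by linarith)
        have h2 := (Real.hasDerivAt_log (by linarith : t ≠ 0)).const_mul C
        exact h1.sub h2)
      (fun t ht => by
        have ht0 : (0:ℝ) < t := by linarith
        have hlow := TrigammaAux.trig_lower t ht
        have hD : (0:ℝ) < t + 1/C - 1 := by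
          have : (0:ℝ) < 1/C := by positivity
          linarith
        have hcmp : C * t⁻¹ ≤ 1 / (t + 1/C - 1) := by
          rw [← div_eq_mul_inv, div_le_div_iff₀ ht0 hD]
          have hexp : C * (t + 1/C - 1) = C*t + 1 - C := by
            field_simp
          rw [hexp, one_mul]
          nlinarith [mul_nonneg (sub_nonneg.2 hC1) (sub_nonneg.2 ht)]
        linarith)
      hx
    simp only [Real.log_one, mul_zero] at hm
    have h2 : digamma (1 + 1) = digamma 2 := by norm_num
    rw [h2] at hm
    linarith
  · -- upper digamma bound
    have hm := TrigammaAux.mono_from_deriv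
      (f := fun t => Real.log t - digamma (1+t))
      (f' := fun t => t⁻¹ - trigamma (1+t))
      (fun t ht =>
        (Real.hasDerivAt_log (by linarith : t ≠ 0)).sub
          (TrigammaAux.hasDerivAt_digamma t (by linarith)))
      (fun t ht => by
        have ht0 : (0:ℝ) < t := by linarith
        have h := hupper t ht
        have : (1:ℝ) / (t + 1/2) ≤ t⁻¹ := by
          rw [one_div, inv_le_inv₀ (by linarith) ht0]
          linarith
        linarith)
      hx
    simp only [Real.log_one] at hm
    have h2 : digamma (1 + 1) = digamma 2 := by norm_num
    rw [h2] at hm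
    linarith
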